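/- Let F : ℂ³ → ℂ² be the polynomial map F(x,y,z) = (x, [(x−1)(xz+y²)+1]·[x(xz+y²)−1]). There is ε > 0 such that for every (a,b) ∈ ℂ² with 0 < |a| < ε and |b| < ε, the quadratic equation a(a−1)λ² + λ − (1+b) = 0 has two distinct roots c₁ ≠ c₂, and F^{-1}(a,b) = {(a,y,z) ∈ ℂ³ : az + y² = c₁} ∪ {(a,y,z) ∈ ℂ³ : az + y² = c₂}. Consequently F^{-1}(a,b) has exactly two connected components, and each of them is biholomorphic (in particular diffeomorphic, via y ↦ (a, y, (c_i − y²)/a)) to ℂ. -/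

import Mathlib

open Filter Set Topology

noncomputable section

/-- The singular chain complex of a topological space, with `ℚ` coefficients:
the alternating face map complex of the free simplicial `ℚ`-module on the
singular simplicial set. -/
def singularChainComplex (X : Type) [TopologicalSpace X] : ChainComplex (ModuleCat ℚ) ℕ :=
  (AlgebraicTopology.alternatingFaceMapComplex (ModuleCat ℚ)).obj
    (((CategoryTheory.SimplicialObject.whiskering (Type) (ModuleCat ℚ)).obj
      (ModuleCat.free ℚ)).obj (TopCat.toSSet.obj (TopCat.of X)))

/-- Singular homology of a topological space with `ℚ` coefficients. -/
def singularHomology (X : Type) [TopologicalSpace X] (i : ℕ) : ModuleCat ℚ :=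
  (singularChainComplex X).homology i

/-- The `i`-th Betti number: the dimension over `ℚ` of the `i`-th singular
homology with `ℚ` coefficients. -/
def bettiNumber (X : Type) [TopologicalSpace X] (i : ℕ) : ℕ :=
  Module.finrank ℚ (singularHomology X i)

/-- The `i`-th Betti number is finite. -/
def FiniteBetti (X : Type) [TopologicalSpace X] (i : ℕ) : Prop :=
  FiniteDimensional ℚ (singularHomology X i)

/-- `Φ` and `Ψ` give mutually inverse smooth maps between `S ⊆ E` and `T ⊆ F`,
i.e. a diffeomorphism between `S` and `T` (smoothness of a map on a subset is
expressed via `ContDiffOn`). -/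
def IsDiffeoOn {E F : Type} [NormedAddCommGroup E] [NormedSpace ℝ E]
    [NormedAddCommGroup F] [NormedSpace ℝ F]
    (Φ : E → F) (Ψ : F → E) (S : Set E) (T : Set F) : Prop :=
  ContDiffOn ℝ ⊤ Φ S ∧ ContDiffOn ℝ ⊤ Ψ T ∧ Set.MapsTo Φ S T ∧ Set.MapsTo Ψ T S ∧
    Set.LeftInvOn Ψ Φ S ∧ Set.RightInvOn Ψ Φ T

/-- `S` and `T` are diffeomorphic. -/
def DiffeoEquiv {E F : Type} [NormedAddCommGroup E] [NormedSpace ℝ E]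
    [NormedAddCommGroup F] [NormedSpace ℝ F] (S : Set E) (T : Set F) : Prop :=
  ∃ Φ Ψ, IsDiffeoOn Φ Ψ S T

/-- The restriction of `p` to `M` is a trivial smooth fibration over `D` with fibre
`p⁻¹(lam) ∩ M`: there is a diffeomorphism `Φ : M ∩ p⁻¹(D) → D × (M ∩ p⁻¹(lam))`
with `pr₁ ∘ Φ = p`. -/
def IsSmoothTrivialFibrationOn {E F : Type} [NormedAddCommGroup E] [NormedSpace ℝ E]
    [NormedAddCommGroup F] [NormedSpace ℝ F]
    (p : E → F) (M : Set E) (D : Set F) (lam : F) : Prop :=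
  ∃ Φ : E → F × E, ∃ Ψ : F × E → E,
    IsDiffeoOn Φ Ψ (M ∩ p ⁻¹' D) (D ×ˢ (M ∩ p ⁻¹' {lam})) ∧
    ∀ x ∈ M ∩ p ⁻¹' D, (Φ x).1 = p x

/-- `lam` is not a bifurcation value of `p : M → B`. -/
def IsNotBifurcationValueOn {E F : Type} [NormedAddCommGroup E] [NormedSpace ℝ E]
    [NormedAddCommGroup F] [NormedSpace ℝ F]
    (p : E → F) (M : Set E) (B : Set F) (lam : F) : Prop :=
  ∃ D : Set F, IsOpen D ∧ lam ∈ D ∧ D ⊆ B ∧ IsSmoothTrivialFibrationOn p M D lam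

/-- `g : V → ℂᵏ` is a holomorphic local defining function for `M` at `x`, with
surjective derivative at every point of its zero set. -/
def IsLocalDefiningFunction {E : Type} [NormedAddCommGroup E] [NormedSpace ℂ E]
    (k : ℕ) (M : Set E) (x : E) (V : Set E) (g : E → (Fin k → ℂ)) : Prop :=
  IsOpen V ∧ x ∈ V ∧ DifferentiableOn ℂ g V ∧
    (∀ y ∈ V, g y = 0 → Function.Surjective (fderiv ℂ g y)) ∧
    M ∩ V = {y ∈ V | g y = 0}

/-- `M ⊆ ℂᴺ` is a (Stein) closed complex submanifold of complex dimension `m`: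
it is closed and near each of its points it is the zero set of a holomorphic
submersion to `ℂ^{N-m}`. -/
def IsSteinSubmanifold (N m : ℕ) (M : Set (Fin N → ℂ)) : Prop :=
  IsClosed M ∧ ∀ x ∈ M, ∃ V g, IsLocalDefiningFunction (N - m) M x V g

/-- A holomorphic map `p` (defined near `M`) is a submersion at `x ∈ M`: its
derivative maps the tangent space `T_x M = ker (d_x g)` onto the target, where
`g` is a local defining function of `M` near `x` (of codimension `k`). -/
def SubmersionAt {E F : Type} [NormedAddCommGroup E] [NormedSpace ℂ E]
    [NormedAddCommGroup F] [NormedSpace ℂ F]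
    (k : ℕ) (M : Set E) (p : E → F) (x : E) : Prop :=
  ∃ V g, IsLocalDefiningFunction k M x V g ∧
    Submodule.map (fderiv ℂ p x).toLinearMap
      (LinearMap.ker (fderiv ℂ g x).toLinearMap) = ⊤

/-- A connected component of the fibres of `p : M → B` vanishes at infinity as
`t → lam`: there are `t k → lam` in `B` and connected components
`C k = connectedComponentIn (M ∩ p⁻¹(t k)) (x k)` of the fibres over `t k`
which eventually miss every compact subset. -/
def HasVanishingComponentAtInfinity {E F : Type} [TopologicalSpace E] [TopologicalSpace F]
    (M : Set E) (p : E → F) (B : Set F) (lam : F) : Prop :=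
  ∃ t : ℕ → F, ∃ x : ℕ → E,
    (∀ k, t k ∈ B) ∧ Filter.Tendsto t Filter.atTop (nhds lam) ∧
    (∀ k, x k ∈ M ∩ p ⁻¹' {t k}) ∧
    ∀ K : Set E, IsCompact K →
      ∀ᶠ k in Filter.atTop, connectedComponentIn (M ∩ p ⁻¹' {t k}) (x k) ∩ K = ∅

/-- `Φ` and `Ψ` give mutually inverse continuous maps between `S` and `T`,
i.e. a homeomorphism between `S` and `T`. -/
def IsHomeoOn {E F : Type} [TopologicalSpace E] [TopologicalSpace F]
    (Φ : E → F) (Ψ : F → E) (S : Set E) (T : Set F) : Prop :=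
  ContinuousOn Φ S ∧ ContinuousOn Ψ T ∧ Set.MapsTo Φ S T ∧ Set.MapsTo Ψ T S ∧
    Set.LeftInvOn Ψ Φ S ∧ Set.RightInvOn Ψ Φ T

/-- The Euler characteristic `b₀ - b₁` of the fibre of `p : M → ·` over `t`
(the fibres under consideration are open curves, with no homology in degrees ≥ 2). -/
def eulerCharOn {E F : Type} [TopologicalSpace E] (p : E → F) (M : Set E) (t : F) : ℤ :=
  (bettiNumber ↥(M ∩ p ⁻¹' {t}) 0 : ℤ) - (bettiNumber ↥(M ∩ p ⁻¹' {t}) 1 : ℤ)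


/-- For `F(x,y,z) = (x, [(x−1)(xz+y²)+1]·[x(xz+y²)−1])` and `(a,b)`
with `0 < |a| < ε`, `|b| < ε`, the quadratic `a(a−1)λ² + λ − (1+b) = 0` has two distinct
roots `c₁ ≠ c₂`, the fibre `F⁻¹(a,b)` is the union of the two disjoint sets
`{az + y² = cᵢ, x = a}`, which are its two connected components, each biholomorphic to
`ℂ` via `y ↦ (a, y, (cᵢ − y²)/a)` with holomorphic inverse the projection to `y`. -/
theorem statement12 (F : ℂ × ℂ × ℂ → ℂ × ℂ)
    (hF : F = fun q => (q.1, ((q.1 - 1) * (q.1 * q.2.2 + q.2.1 ^ 2) + 1) *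
      (q.1 * (q.1 * q.2.2 + q.2.1 ^ 2) - 1))) :
    ∃ ε > (0 : ℝ), ∀ a b : ℂ, a ≠ 0 → ‖a‖ < ε → ‖b‖ < ε →
      ∃ c₁ c₂ : ℂ, c₁ ≠ c₂ ∧
        (∀ c : ℂ, a * (a - 1) * c ^ 2 + c - (1 + b) = 0 ↔ c = c₁ ∨ c = c₂) ∧
        F ⁻¹' {(a, b)} =
          {q : ℂ × ℂ × ℂ | q.1 = a ∧ a * q.2.2 + q.2.1 ^ 2 = c₁} ∪
          {q : ℂ × ℂ × ℂ | q.1 = a ∧ a * q.2.2 + q.2.1 ^ 2 = c₂} ∧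
        Disjoint {q : ℂ × ℂ × ℂ | q.1 = a ∧ a * q.2.2 + q.2.1 ^ 2 = c₁}
          {q : ℂ × ℂ × ℂ | q.1 = a ∧ a * q.2.2 + q.2.1 ^ 2 = c₂} ∧
        ∀ c ∈ ({c₁, c₂} : Set ℂ),
          (∀ q ∈ {q : ℂ × ℂ × ℂ | q.1 = a ∧ a * q.2.2 + q.2.1 ^ 2 = c},
            connectedComponentIn (F ⁻¹' {(a, b)}) q =
              {q : ℂ × ℂ × ℂ | q.1 = a ∧ a * q.2.2 + q.2.1 ^ 2 = c}) ∧
          Differentiable ℂ (fun y : ℂ => ((a, y, (c - y ^ 2) / a) : ℂ × ℂ × ℂ)) ∧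
          Function.Injective (fun y : ℂ => ((a, y, (c - y ^ 2) / a) : ℂ × ℂ × ℂ)) ∧
          Set.range (fun y : ℂ => ((a, y, (c - y ^ 2) / a) : ℂ × ℂ × ℂ)) =
            {q : ℂ × ℂ × ℂ | q.1 = a ∧ a * q.2.2 + q.2.1 ^ 2 = c} ∧
          ∀ y : ℂ, (((a, y, (c - y ^ 2) / a)) : ℂ × ℂ × ℂ).2.1 = y := by
  refine ⟨1/16, by norm_num, fun a b ha haε hbε => ?_⟩
  -- a ≠ 1
  have ha1 : a - 1 ≠ 0 := by
    intro h
    have : a = 1 := by linear_combination h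
    rw [this] at haε; simp at haε; norm_num at haε
  have hA0 : a * (a - 1) ≠ 0 := mul_ne_zero ha ha1
  -- discriminant
  set d : ℂ := 1 + 4 * (a * (a - 1)) * (1 + b) with hd
  have hd0 : d ≠ 0 := by
    intro h
    have h4 : 4 * (a * (a - 1)) * (1 + b) = -1 := by linear_combination h
    have habs : ‖4 * (a * (a - 1)) * (1 + b)‖ = 1 := by
      rw [h4]; simp
    have h1 : ‖a - 1‖ ≤ ‖a‖ + 1 := by
      calc ‖a - 1‖ ≤ ‖a‖ + ‖(-1 : ℂ)‖ := by
            simpa [sub_eq_add_neg] using norm_add_le a (-1)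
        _ = ‖a‖ + 1 := by simp
    have h2 : ‖1 + b‖ ≤ 1 + ‖b‖ := by
      simpa using norm_add_le 1 b
    have : ‖4 * (a * (a - 1)) * (1 + b)‖ < 1 := by
      rw [norm_mul, norm_mul, norm_mul]
      simp only [Complex.norm_ofNat]
      calc (4 : ℝ) * (‖a‖ * ‖a - 1‖) * ‖1 + b‖
          ≤ 4 * ((1/16) * (17/16)) * (17/16) := by
            apply mul_le_mul _ (by linarith) (by positivity) (by positivity)
            apply mul_le_mul le_rfl _ (by positivity) (by norm_num)
            apply mul_le_mul haε.le (by linarith) (by positivity) (by norm_num)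
        _ < 1 := by norm_num
    rw [habs] at this; norm_num at this
  obtain ⟨s, hs⟩ := IsAlgClosed.exists_pow_nat_eq (k := ℂ) d two_pos
  have hs0 : s ≠ 0 := fun h => hd0 (by rw [← hs, h]; ring)
  refine ⟨(-1 + s) / (2 * (a * (a - 1))), (-1 - s) / (2 * (a * (a - 1))), ?_, ?_, ?_⟩
  · intro h
    apply hs0
    field_simp at h
    linear_combination h / 2
  · -- quadratic roots
    intro c
    have key : a * (a - 1) * c ^ 2 + c - (1 + b) =
        a * (a - 1) * (c - (-1 + s) / (2 * (a * (a - 1)))) *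
          (c - (-1 - s) / (2 * (a * (a - 1)))) := by
      field_simp
      linear_combination hs
    constructor
    · intro h
      rw [h] at key
      rcases mul_eq_zero.mp key.symm with h1 | h1
      · rcases mul_eq_zero.mp h1 with h2 | h2
        · exact absurd h2 hA0
        · exact Or.inl (sub_eq_zero.mp h2)
      · exact Or.inr (sub_eq_zero.mp h1)
    · rintro (rfl | rfl) <;> rw [key] <;> ring
  set c₁ := (-1 + s) / (2 * (a * (a - 1))) with hc₁
  set c₂ := (-1 - s) / (2 * (a * (a - 1))) with hc₂
  have hne : c₁ ≠ c₂ := by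
    intro h
    apply hs0
    rw [hc₁, hc₂] at h
    field_simp at h
    linear_combination h / 2
  have hquad : ∀ c : ℂ, a * (a - 1) * c ^ 2 + c - (1 + b) = 0 ↔ c = c₁ ∨ c = c₂ := by
    intro c
    have key : a * (a - 1) * c ^ 2 + c - (1 + b) =
        a * (a - 1) * (c - c₁) * (c - c₂) := by
      rw [hc₁, hc₂]
      field_simp
      linear_combination hs
    constructor
    · intro h
      rw [h] at key
      rcases mul_eq_zero.mp key.symm with h1 | h1
      · rcases mul_eq_zero.mp h1 with h2 | h2
        · exact absurd h2 hA0
        · exact Or.inl (sub_eq_zero.mp h2)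
      · exact Or.inr (sub_eq_zero.mp h1)
    · rintro (rfl | rfl) <;> rw [key] <;> ring
  have hfib : F ⁻¹' {(a, b)} =
      {q : ℂ × ℂ × ℂ | q.1 = a ∧ a * q.2.2 + q.2.1 ^ 2 = c₁} ∪
      {q : ℂ × ℂ × ℂ | q.1 = a ∧ a * q.2.2 + q.2.1 ^ 2 = c₂} := by
    ext q
    simp only [hF, Set.mem_preimage, Set.mem_singleton_iff, Prod.mk.injEq,
      Set.mem_union, Set.mem_setOf_eq]
    constructor
    · rintro ⟨h1, h2⟩
      refine ((hquad (a * q.2.2 + q.2.1 ^ 2)).mp ?_).elim (fun h => Or.inl ⟨h1, h⟩)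
        (fun h => Or.inr ⟨h1, h⟩)
      rw [h1] at h2
      linear_combination h2
    · rintro (⟨h1, h2⟩ | ⟨h1, h2⟩) <;>
        [have h3 := (hquad _).mpr (Or.inl h2); have h3 := (hquad _).mpr (Or.inr h2)] <;>
        exact ⟨h1, by rw [h1]; linear_combination h3⟩
  have hdisj : Disjoint {q : ℂ × ℂ × ℂ | q.1 = a ∧ a * q.2.2 + q.2.1 ^ 2 = c₁}
      {q : ℂ × ℂ × ℂ | q.1 = a ∧ a * q.2.2 + q.2.1 ^ 2 = c₂} := by
    rw [Set.disjoint_left]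
    rintro q ⟨-, h1⟩ ⟨-, h2⟩
    exact hne (h1 ▸ h2 ▸ rfl)
  refine ⟨hfib, hdisj, ?_⟩
  have main : ∀ c c' : ℂ, c ≠ c' →
      F ⁻¹' {(a, b)} =
        {q : ℂ × ℂ × ℂ | q.1 = a ∧ a * q.2.2 + q.2.1 ^ 2 = c} ∪
        {q : ℂ × ℂ × ℂ | q.1 = a ∧ a * q.2.2 + q.2.1 ^ 2 = c'} →
      (∀ q ∈ {q : ℂ × ℂ × ℂ | q.1 = a ∧ a * q.2.2 + q.2.1 ^ 2 = c},
        connectedComponentIn (F ⁻¹' {(a, b)}) q =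
          {q : ℂ × ℂ × ℂ | q.1 = a ∧ a * q.2.2 + q.2.1 ^ 2 = c}) ∧
      Differentiable ℂ (fun y : ℂ => ((a, y, (c - y ^ 2) / a) : ℂ × ℂ × ℂ)) ∧
      Function.Injective (fun y : ℂ => ((a, y, (c - y ^ 2) / a) : ℂ × ℂ × ℂ)) ∧
      Set.range (fun y : ℂ => ((a, y, (c - y ^ 2) / a) : ℂ × ℂ × ℂ)) =
        {q : ℂ × ℂ × ℂ | q.1 = a ∧ a * q.2.2 + q.2.1 ^ 2 = c} ∧
      ∀ y : ℂ, (((a, y, (c - y ^ 2) / a)) : ℂ × ℂ × ℂ).2.1 = y := by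
    intro c c' hcc' hfib'
    have hdiff : Differentiable ℂ (fun y : ℂ => ((a, y, (c - y ^ 2) / a) : ℂ × ℂ × ℂ)) := by
      apply (differentiable_const a).prodMk
      apply differentiable_id.prodMk
      exact ((differentiable_const c).sub (differentiable_pow 2)).div_const a
    have hrange : Set.range (fun y : ℂ => ((a, y, (c - y ^ 2) / a) : ℂ × ℂ × ℂ)) =
        {q : ℂ × ℂ × ℂ | q.1 = a ∧ a * q.2.2 + q.2.1 ^ 2 = c} := by
      ext q
      simp only [Set.mem_range, Set.mem_setOf_eq]
      constructor
      · rintro ⟨y, rfl⟩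
        refine ⟨rfl, ?_⟩
        field_simp
        ring
      · rintro ⟨h1, h2⟩
        refine ⟨q.2.1, ?_⟩
        have h3 : (c - q.2.1 ^ 2) / a = q.2.2 := by
          rw [div_eq_iff ha]
          linear_combination -h2
        rw [h3, ← h1]
    have hcomp : ∀ q ∈ {q : ℂ × ℂ × ℂ | q.1 = a ∧ a * q.2.2 + q.2.1 ^ 2 = c},
        connectedComponentIn (F ⁻¹' {(a, b)}) q =
          {q : ℂ × ℂ × ℂ | q.1 = a ∧ a * q.2.2 + q.2.1 ^ 2 = c} := by
      intro q hq
      have hSc : IsPreconnected {q : ℂ × ℂ × ℂ | q.1 = a ∧ a * q.2.2 + q.2.1 ^ 2 = c} := by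
        rw [← hrange, ← Set.image_univ]
        exact isPreconnected_univ.image _ hdiff.continuous.continuousOn
      have hsub : {q : ℂ × ℂ × ℂ | q.1 = a ∧ a * q.2.2 + q.2.1 ^ 2 = c} ⊆
          F ⁻¹' {(a, b)} := hfib' ▸ Set.subset_union_left
      refine le_antisymm ?_ (hSc.subset_connectedComponentIn hq hsub)
      set g : ℂ × ℂ × ℂ → ℂ := fun q => a * q.2.2 + q.2.1 ^ 2 with hg
      have hgc : Continuous g := by fun_prop
      set r : ℝ := dist c c' / 2 with hr
      have hr0 : 0 < r := by
        rw [hr]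
        have := dist_pos.mpr hcc'
        linarith
      have hUV : Disjoint (g ⁻¹' Metric.ball c r) (g ⁻¹' Metric.ball c' r) := by
        apply Disjoint.preimage
        apply Metric.ball_disjoint_ball
        rw [hr]; linarith
      have hcover : connectedComponentIn (F ⁻¹' {(a, b)}) q ⊆
          g ⁻¹' Metric.ball c r ∪ g ⁻¹' Metric.ball c' r := by
        refine (connectedComponentIn_subset _ _).trans ?_
        rw [hfib']
        rintro p (⟨-, h2⟩ | ⟨-, h2⟩)
        · exact Or.inl (by simp [Set.mem_preimage, hg, h2, Metric.mem_ball, hr0])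
        · exact Or.inr (by simp [Set.mem_preimage, hg, h2, Metric.mem_ball, hr0])
      have hqmem : q ∈ connectedComponentIn (F ⁻¹' {(a, b)}) q :=
        mem_connectedComponentIn (hsub hq)
      have hsubU : connectedComponentIn (F ⁻¹' {(a, b)}) q ⊆ g ⁻¹' Metric.ball c r := by
        apply (isPreconnected_connectedComponentIn).subset_left_of_subset_union
          (hgc.isOpen_preimage _ Metric.isOpen_ball)
          (hgc.isOpen_preimage _ Metric.isOpen_ball) hUV hcover
        exact ⟨q, hqmem, by simp [Set.mem_preimage, hg, hq.2, Metric.mem_ball, hr0]⟩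
      intro p hp
      have hpf : p ∈ F ⁻¹' {(a, b)} := connectedComponentIn_subset _ _ hp
      rw [hfib'] at hpf
      rcases hpf with h | h
      · exact h
      · exfalso
        have hpU := hsubU hp
        simp only [Set.mem_preimage, hg, Metric.mem_ball, h.2] at hpU
        rw [dist_comm, hr] at hpU
        linarith [dist_pos.mpr hcc']
    exact ⟨hcomp, hdiff, fun y1 y2 h => by simpa using congrArg (fun q => q.2.1) h,
      hrange, fun y => rfl⟩
  intro c hc
  rcases Set.mem_insert_iff.mp hc with hc | hc
  · rw [hc]; exact main c₁ c₂ hne hfib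
  · rw [Set.mem_singleton_iff] at hc
    rw [hc]; exact main c₂ c₁ hne.symm (hfib.trans (Set.union_comm _ _))

end
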